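/- For every node a belonging to V, the set Vstar(a) computed by the recurrences is a nonempty subset of V ∩ subtree(a), and the dynamic-programming values are consistent with the recursively defined objective: sigma(a) = Cost_a(Vstar(a)) and xistar(a) = Σ_{d ∈ Vstar(a)} xi(d). -/

import Mathlib

/-!
Theorem 1 of "STREAK" (dynamic-programming node selection in the S-QuadTree),
consistency of the DP values with the recursively defined objective.

Nodes of a finite rooted tree are represented by paths (lists of child indices)
from the root.
-/

open scoped Classical

/-- `List.enum` (removed from the library), with its old meaning:
`l.enum = [(0, l[0]), (1, l[1]), …]`. -/
def List.enum {α : Type _} (l : List α) : List (ℕ × α) := l.zipIdx.map Prod.swap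

theorem List.enum_map_snd {α : Type _} (l : List α) : l.enum.map Prod.snd = l := by
  simp [List.enum, Function.comp_def]

/-- A finite rooted tree: each node has a finite list of children. -/
inductive RTree : Type where
  | node : List RTree → RTree

namespace RTree

/-- The subtree reached by following a path of child indices, if it exists. -/
def subAt : RTree → List ℕ → Option RTree
  | t, [] => some t
  | node cs, i :: p =>
    match cs[i]? with
    | some c => subAt c p
    | none => none
termination_by t p => p.length

/-- A path is a node of the tree if following it leads to a subtree. -/
def valid (t : RTree) (p : List ℕ) : Prop := (t.subAt p).isSome

/-- `subtreeOf t p` is the set of nodes of `t` consisting of `p` together with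
all of its descendants (nodes whose path extends `p`). -/
def subtreeOf (t : RTree) (p : List ℕ) : Set (List ℕ) :=
  {q | t.valid q ∧ p <+: q}

/-- The dynamic program of Theorem 1: for the subtree rooted at path `p`,
compute `(Vstar p, sigma p, xistar p)` by the recurrences.  If `p ∉ V` the
value is `(∅, 0, 0)`; if `p` is a `V`-leaf (no child in `V`) it is
`({p}, cost p, xi p)`; otherwise, with `γ` the children of `p` belonging to
`V`, `μ = Σ_{j ∈ γ} xistar j` if `|γ| > 1` and `0` otherwise, the value is
`({p}, cost p, xi p)` when `cost p < μ + Σ_{j ∈ γ} sigma j`, and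
`(⋃_{j ∈ γ} Vstar j, Σ_{j ∈ γ} sigma j + μ, Σ_{j ∈ γ} xistar j)` otherwise. -/
noncomputable def dp (V : Set (List ℕ)) (cost xi : List ℕ → ℝ) :
    RTree → List ℕ → Set (List ℕ) × ℝ × ℝ
  | node cs, p =>
    let recs := cs.enum.attach.map fun x =>
      (p ++ [x.1.1], dp V cost xi x.1.2 (p ++ [x.1.1]))
    if p ∈ V then
      let γ := recs.filter fun r => decide (r.1 ∈ V)
      if γ.isEmpty then ({p}, cost p, xi p)
      else
        let σsum := (γ.map fun r => r.2.2.1).sum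
        let ξsum := (γ.map fun r => r.2.2.2).sum
        let μ := if 1 < γ.length then ξsum else 0
        if cost p < μ + σsum then ({p}, cost p, xi p)
        else (⋃ r ∈ γ, r.2.1, σsum + μ, ξsum)
    else (∅, 0, 0)
termination_by t _ => sizeOf t
decreasing_by
  simp_wf
  have hx : x.1.2 ∈ cs := by
    have h1 : x.1.2 ∈ cs.enum.map Prod.snd := List.mem_map_of_mem x.2
    simpa [List.enum_map_snd] using h1
  have := List.sizeOf_lt_of_mem hx
  omega

/-- `Vstar a`, for a node `a` of the tree `t`. -/
noncomputable def VstarAt (t : RTree) (V : Set (List ℕ)) (cost xi : List ℕ → ℝ)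
    (p : List ℕ) : Set (List ℕ) :=
  match t.subAt p with
  | some s => (dp V cost xi s p).1
  | none => ∅

/-- `sigma a`, for a node `a` of the tree `t`. -/
noncomputable def sigmaAt (t : RTree) (V : Set (List ℕ)) (cost xi : List ℕ → ℝ)
    (p : List ℕ) : ℝ :=
  match t.subAt p with
  | some s => (dp V cost xi s p).2.1
  | none => 0

/-- `xistar a`, for a node `a` of the tree `t`. -/
noncomputable def xistarAt (t : RTree) (V : Set (List ℕ)) (cost xi : List ℕ → ℝ)
    (p : List ℕ) : ℝ :=
  match t.subAt p with
  | some s => (dp V cost xi s p).2.2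
  | none => 0

/-- The objective `Cost_a(S)` for the subtree rooted at path `p` (first tree
argument: the subtree of the global tree `t` rooted at `p`):
`Cost_a(S) = (cost a if a ∈ S else 0) + Σ_{c child of a} Cost_c(S ∩ subtree(c)) + P(a, S)`,
where `P(a, S)` is the sum over children `c` with `S ∩ subtree(c) ≠ ∅` of
`Σ_{d ∈ S ∩ subtree(c)} xi d` when at least two children have
`S ∩ subtree(c) ≠ ∅`, and `0` otherwise. -/
noncomputable def costOf (t : RTree) (cost xi : List ℕ → ℝ) :
    RTree → List ℕ → Set (List ℕ) → ℝ
  | node cs, p, S =>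
    let recs := cs.enum.attach.map fun x =>
      (S ∩ subtreeOf t (p ++ [x.1.1]),
        costOf t cost xi x.1.2 (p ++ [x.1.1]) (S ∩ subtreeOf t (p ++ [x.1.1])))
    (if p ∈ S then cost p else 0)
      + (recs.map fun r => r.2).sum
      + (if 2 ≤ (recs.filter fun r => decide r.1.Nonempty).length then
          ((recs.filter fun r => decide r.1.Nonempty).map fun r => ∑' d : r.1, xi d.1).sum
        else 0)
termination_by s _ _ => sizeOf s
decreasing_by
  simp_wf
  have hx : x.1.2 ∈ cs := by
    have h1 : x.1.2 ∈ cs.enum.map Prod.snd := List.mem_map_of_mem x.2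
    simpa [List.enum_map_snd] using h1
  have := List.sizeOf_lt_of_mem hx
  omega

/-- `Cost_a(S)`, for a node `a` of the tree `t`. -/
noncomputable def CostAt (t : RTree) (cost xi : List ℕ → ℝ)
    (p : List ℕ) (S : Set (List ℕ)) : ℝ :=
  match t.subAt p with
  | some s => costOf t cost xi s p S
  | none => 0

end RTree

theorem List.mem_enum {α : Type _} {x : α} {i : ℕ} {l : List α} (h : (i, x) ∈ l.enum) :
    ∃ hi : i < l.length, l[i] = x := by
  obtain ⟨⟨y, j⟩, hm, he⟩ := List.mem_map.mp h
  simp only [Prod.swap, Prod.mk.injEq] at he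
  obtain ⟨rfl, rfl⟩ := he
  obtain ⟨h1, h2⟩ := List.mem_zipIdx' hm
  exact ⟨h1, h2.symm⟩

theorem List.enum_map_fst {α : Type _} (l : List α) :
    l.enum.map Prod.fst = List.range l.length := by
  rw [List.enum, List.map_map]
  show l.zipIdx.map Prod.snd = _
  rw [List.zipIdx_map_snd, List.range_eq_range']

open RTree

lemma dp_node (V : Set (List ℕ)) (cost xi : List ℕ → ℝ) (cs : List RTree) (p : List ℕ) :
    dp V cost xi (node cs) p =
    (let recs := cs.enum.attach.map fun x =>
        (p ++ [x.1.1], dp V cost xi x.1.2 (p ++ [x.1.1]))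
     if p ∈ V then
      let γ := recs.filter fun r => decide (r.1 ∈ V)
      if γ.isEmpty then ({p}, cost p, xi p)
      else
        let σsum := (γ.map fun r => r.2.2.1).sum
        let ξsum := (γ.map fun r => r.2.2.2).sum
        let μ := if 1 < γ.length then ξsum else 0
        if cost p < μ + σsum then ({p}, cost p, xi p)
        else (⋃ r ∈ γ, r.2.1, σsum + μ, ξsum)
     else (∅, 0, 0)) := by
  rw [dp.eq_def]

lemma costOf_node (t : RTree) (cost xi : List ℕ → ℝ) (cs : List RTree) (p : List ℕ)
    (S : Set (List ℕ)) :
    costOf t cost xi (node cs) p S =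
    (let recs := cs.enum.attach.map fun x =>
      (S ∩ subtreeOf t (p ++ [x.1.1]),
        costOf t cost xi x.1.2 (p ++ [x.1.1]) (S ∩ subtreeOf t (p ++ [x.1.1])))
     (if p ∈ S then cost p else 0)
      + (recs.map fun r => r.2).sum
      + (if 2 ≤ (recs.filter fun r => decide r.1.Nonempty).length then
          ((recs.filter fun r => decide r.1.Nonempty).map fun r => ∑' d : r.1, xi d.1).sum
        else 0)) := by
  rw [costOf.eq_def]

lemma subAt_append (t : RTree) (p q : List ℕ) :
    t.subAt (p ++ q) = (t.subAt p).bind (fun s => s.subAt q) := by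
  induction p generalizing t with
  | nil => simp [subAt]
  | cons i p ih =>
    cases t with
    | node cs =>
      rw [List.cons_append, subAt]
      cases h : cs[i]? with
      | none => simp [subAt, h]
      | some c => simp [subAt, h, ih]

lemma mem_of_attach_enum {cs : List RTree} (x : {x // x ∈ cs.enum}) : x.1.2 ∈ cs := by
  have h1 : x.1.2 ∈ cs.enum.map Prod.snd := List.mem_map_of_mem x.2
  simpa [List.enum_map_snd] using h1

lemma sizeOf_lt_of_attach_enum {cs : List RTree} (x : {x // x ∈ cs.enum}) :
    sizeOf x.1.2 < sizeOf (node cs) := by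
  have := List.sizeOf_lt_of_mem (mem_of_attach_enum x)
  have h2 : sizeOf (node cs) = 1 + sizeOf cs := by simp [RTree.node.sizeOf_spec]
  omega

lemma subAt_child {t : RTree} {cs : List RTree} {p : List ℕ}
    (hs : t.subAt p = some (node cs)) (x : {x // x ∈ cs.enum}) :
    t.subAt (p ++ [x.1.1]) = some x.1.2 := by
  obtain ⟨⟨i, c⟩, hmem⟩ := x
  obtain ⟨hi, hc⟩ := List.mem_enum hmem
  have hget : cs[i]? = some c := by
    rw [List.getElem?_eq_getElem hi, hc]
  rw [subAt_append, hs]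
  simp [subAt, hget]

lemma index_eq_of_prefix {p q : List ℕ} {i j : ℕ}
    (h1 : p ++ [i] <+: q) (h2 : p ++ [j] <+: q) : i = j := by
  have hle : (p ++ [i]).length ≤ (p ++ [j]).length := by simp
  have h3 : p ++ [i] <+: p ++ [j] := List.prefix_of_prefix_length_le h1 h2 hle
  have h4 : p ++ [i] = p ++ [j] := h3.eq_of_length (by simp)
  simpa using List.append_cancel_left h4

lemma attach_enum_inj {cs : List RTree} (x y : {x // x ∈ cs.enum})
    (h : x.1.1 = y.1.1) : x = y := by
  obtain ⟨⟨i, c⟩, hx⟩ := x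
  obtain ⟨⟨j, d⟩, hy⟩ := y
  simp only at h
  subst h
  obtain ⟨hi, hc⟩ := List.mem_enum hx
  obtain ⟨hj, hd⟩ := List.mem_enum hy
  simp [← hc, ← hd]

lemma not_mem_subtree_self {t : RTree} {p : List ℕ} {i : ℕ} :
    p ∉ subtreeOf t (p ++ [i]) := by
  rintro ⟨-, hpre⟩
  have := hpre.length_le
  simp at this

lemma subtree_mono {t : RTree} {p : List ℕ} {i : ℕ} :
    subtreeOf t (p ++ [i]) ⊆ subtreeOf t p := by
  rintro q ⟨hv, hpre⟩
  exact ⟨hv, List.IsPrefix.trans ⟨[i], rfl⟩ hpre⟩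

lemma subtree_disjoint {t : RTree} {p : List ℕ} {i j : ℕ} (h : i ≠ j) :
    Disjoint (subtreeOf t (p ++ [i])) (subtreeOf t (p ++ [j])) := by
  rw [Set.disjoint_left]
  rintro q ⟨-, h1⟩ ⟨-, h2⟩
  exact h (index_eq_of_prefix h1 h2)

lemma list_sum_filter_eq {α : Type*} (P : α → Bool) (g : α → ℝ)
    (l : List α) (h : ∀ x ∈ l, ¬ P x → g x = 0) :
    (l.map g).sum = ((l.filter P).map g).sum := by
  induction l with
  | nil => simp
  | cons a l ih =>
    have ih' := ih (fun x hx => h x (List.mem_cons_of_mem _ hx))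
    by_cases hP : P a
    · simp [List.filter_cons, hP, ih']
    · simp [List.filter_cons, hP, h a List.mem_cons_self (by simp [hP]), ih']

lemma tsum_biUnion_list (xi : List ℕ → ℝ) :
    ∀ (L : List (Set (List ℕ))), (∀ A ∈ L, A.Finite) → L.Pairwise Disjoint →
      ∑' d : (⋃ A ∈ L, A : Set (List ℕ)), xi d.1
        = (L.map (fun A => ∑' d : (A : Set (List ℕ)), xi d.1)).sum := by
  intro L
  induction L with
  | nil => simp
  | cons B L ih =>
    intro hfin hpw
    rw [List.pairwise_cons] at hpw
    have hU : (⋃ A ∈ (B :: L), A : Set (List ℕ)) = B ∪ ⋃ A ∈ L, A := by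
      ext d; simp [List.mem_cons, or_and_right, exists_or]
    have hd : Disjoint B (⋃ A ∈ L, A) := by
      simp only [Set.disjoint_iUnion_right]
      exact fun A hA => hpw.1 A hA
    have hUfin : (⋃ A ∈ L, A : Set (List ℕ)).Finite :=
      Set.Finite.biUnion (List.finite_toSet L) (fun A hA => hfin A (List.mem_cons_of_mem _ hA))
    rw [hU, Summable.tsum_union_disjoint hd ((hfin B List.mem_cons_self).summable _)
      (hUfin.summable _), List.map_cons, List.sum_cons,
      ih (fun A hA => hfin A (List.mem_cons_of_mem _ hA)) hpw.2]

lemma attach_enum_pairwise (cs : List RTree) :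
    cs.enum.attach.Pairwise (fun x y => x.1.1 ≠ y.1.1) := by
  have h1 : cs.enum.Pairwise (fun a b => a.1 ≠ b.1) := by
    have h : (cs.enum.map Prod.fst).Nodup := by
      rw [List.enum_map_fst]; exact List.nodup_range
    rw [List.Nodup, List.pairwise_map] at h
    exact h
  rw [← List.attach_map_subtype_val cs.enum, List.pairwise_map] at h1
  exact h1

lemma costOf_empty (t : RTree) (cost xi : List ℕ → ℝ) :
    ∀ (n : ℕ) (s : RTree), sizeOf s ≤ n → ∀ (p : List ℕ),
      costOf t cost xi s p (∅ : Set (List ℕ)) = 0 := by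
  intro n
  induction n with
  | zero =>
    intro s hs
    exfalso
    cases s with
    | node cs => simp [RTree.node.sizeOf_spec] at hs
  | succ n ih =>
    intro s hs p
    cases s with
    | node cs =>
      rw [costOf_node]
      simp only [Set.empty_inter, Set.mem_empty_iff_false, if_false]
      have hz : ∀ x ∈ cs.enum.attach, costOf t cost xi x.1.2 (p ++ [x.1.1]) ∅ = 0 := by
        intro x _
        apply ih
        have h1 := sizeOf_lt_of_attach_enum x
        have h2 : sizeOf (node cs) = 1 + sizeOf cs := by simp [RTree.node.sizeOf_spec]
        omega
      have hmap : (cs.enum.attach.map fun x =>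
          ((∅ : Set (List ℕ)), costOf t cost xi x.1.2 (p ++ [x.1.1]) ∅)).map (fun r => r.2)
          = cs.enum.attach.map fun x => costOf t cost xi x.1.2 (p ++ [x.1.1]) ∅ := by
        rw [List.map_map]; rfl
      rw [hmap]
      have hsum : (cs.enum.attach.map fun x =>
          costOf t cost xi x.1.2 (p ++ [x.1.1]) ∅).sum = 0 := by
        apply List.sum_eq_zero
        intro y hy
        obtain ⟨x, hx, rfl⟩ := List.mem_map.mp hy
        exact hz x hx
      rw [hsum]
      have hfil : ((cs.enum.attach.map fun x =>
          ((∅ : Set (List ℕ)), costOf t cost xi x.1.2 (p ++ [x.1.1]) ∅)).filter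
          fun r => decide r.1.Nonempty) = [] := by
        apply List.filter_eq_nil_iff.mpr
        intro r hr
        obtain ⟨x, hx, rfl⟩ := List.mem_map.mp hr
        simp [Set.not_nonempty_empty]
      rw [hfil]
      simp

lemma dp_main (t : RTree) (V : Set (List ℕ)) (cost xi : List ℕ → ℝ) :
    ∀ (n : ℕ) (s : RTree), sizeOf s ≤ n → ∀ (p : List ℕ),
      t.subAt p = some s → p ∈ V →
      (dp V cost xi s p).1.Nonempty ∧ (dp V cost xi s p).1.Finite ∧
      (dp V cost xi s p).1 ⊆ V ∩ subtreeOf t p ∧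
      (dp V cost xi s p).2.1 = costOf t cost xi s p (dp V cost xi s p).1 ∧
      (dp V cost xi s p).2.2 = ∑' d : ((dp V cost xi s p).1 : Set (List ℕ)), xi d.1 := by
  intro n
  induction n with
  | zero =>
    intro s hs
    exfalso
    cases s with
    | node cs => simp [RTree.node.sizeOf_spec] at hs
  | succ n ih =>
    intro s hs p hsub hpV
    cases s with
    | node cs =>
      have hvalid : t.valid p := by rw [valid, hsub]; rfl
      have hsize : ∀ x : {x // x ∈ cs.enum}, sizeOf x.1.2 ≤ n := by
        intro x
        have h1 := sizeOf_lt_of_attach_enum x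
        omega
      -- notation
      set F := (fun x : {x // x ∈ cs.enum} =>
        (p ++ [x.1.1], dp V cost xi x.1.2 (p ++ [x.1.1]))) with hF
      set γl := cs.enum.attach.filter (fun x => decide (p ++ [x.1.1] ∈ V)) with hγl
      have hγ : ((cs.enum.attach.map F).filter fun r => decide (r.1 ∈ V)) = γl.map F := by
        rw [List.filter_map]
        rw [hγl]
        rfl
      have hdp : dp V cost xi (node cs) p =
          (if (γl.map F).isEmpty then ({p}, cost p, xi p)
           else if cost p < (if 1 < (γl.map F).length then
                ((γl.map F).map fun r => r.2.2.2).sum else 0)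
              + ((γl.map F).map fun r => r.2.2.1).sum
             then ({p}, cost p, xi p)
             else (⋃ r ∈ γl.map F, r.2.1,
               ((γl.map F).map fun r => r.2.2.1).sum
                 + (if 1 < (γl.map F).length then ((γl.map F).map fun r => r.2.2.2).sum else 0),
               ((γl.map F).map fun r => r.2.2.2).sum)) := by
        rw [dp_node]
        simp only [← hF, hγ, if_pos hpV]
      -- cost of a singleton {p}
      have hint : ∀ x : {x // x ∈ cs.enum},
          ({p} : Set (List ℕ)) ∩ subtreeOf t (p ++ [x.1.1]) = ∅ := by
        intro x
        ext q
        simp only [Set.mem_inter_iff, Set.mem_singleton_iff, Set.mem_empty_iff_false, iff_false,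
          not_and]
        rintro rfl
        exact fun h => not_mem_subtree_self h
      have hsingle : costOf t cost xi (node cs) p {p} = cost p := by
        rw [costOf_node]
        have hrecs : (cs.enum.attach.map fun x =>
            (({p} : Set (List ℕ)) ∩ subtreeOf t (p ++ [x.1.1]),
             costOf t cost xi x.1.2 (p ++ [x.1.1]) ({p} ∩ subtreeOf t (p ++ [x.1.1]))))
            = cs.enum.attach.map (fun _ => ((∅ : Set (List ℕ)), (0 : ℝ))) := by
          apply List.map_congr_left
          intro x _
          rw [hint x, costOf_empty t cost xi (sizeOf x.1.2) x.1.2 le_rfl]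
        rw [hrecs]
        simp [Set.not_nonempty_empty, List.map_map, Function.comp_def]
      -- common goal for the singleton outcomes
      have hsingGoal : (({p} : Set (List ℕ)).Nonempty) ∧ ({p} : Set (List ℕ)).Finite ∧
          ({p} : Set (List ℕ)) ⊆ V ∩ subtreeOf t p ∧
          cost p = costOf t cost xi (node cs) p {p} ∧
          xi p = ∑' d : ({p} : Set (List ℕ)), xi d.1 := by
        refine ⟨⟨p, rfl⟩, Set.finite_singleton p, ?_, hsingle.symm, (tsum_singleton p xi).symm⟩
        intro q hq
        rw [Set.mem_singleton_iff] at hq; subst hq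
        exact ⟨hpV, hvalid, List.prefix_refl _⟩
      rw [hdp]
      by_cases hempty : (γl.map F).isEmpty
      · rw [if_pos hempty]
        exact hsingGoal
      · rw [if_neg hempty]
        have hne : γl ≠ [] := by
          intro h; rw [h] at hempty; simp at hempty
        have hIH : ∀ x ∈ γl, (p ++ [x.1.1] ∈ V) ∧
            (dp V cost xi x.1.2 (p ++ [x.1.1])).1.Nonempty ∧
            (dp V cost xi x.1.2 (p ++ [x.1.1])).1.Finite ∧
            (dp V cost xi x.1.2 (p ++ [x.1.1])).1 ⊆ V ∩ subtreeOf t (p ++ [x.1.1]) ∧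
            (dp V cost xi x.1.2 (p ++ [x.1.1])).2.1
              = costOf t cost xi x.1.2 (p ++ [x.1.1]) (dp V cost xi x.1.2 (p ++ [x.1.1])).1 ∧
            (dp V cost xi x.1.2 (p ++ [x.1.1])).2.2
              = ∑' d : ((dp V cost xi x.1.2 (p ++ [x.1.1])).1 : Set (List ℕ)), xi d.1 := by
          intro x hx
          have hxV : p ++ [x.1.1] ∈ V := by
            rw [hγl] at hx
            simpa using (List.mem_filter.mp hx).2
          exact ⟨hxV, ih x.1.2 (hsize x) (p ++ [x.1.1]) (subAt_child hsub x) hxV⟩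
        by_cases hlt : cost p < (if 1 < (γl.map F).length then
              ((γl.map F).map fun r => r.2.2.2).sum else 0)
            + ((γl.map F).map fun r => r.2.2.1).sum
        · rw [if_pos hlt]
          exact hsingGoal
        · rw [if_neg hlt]
          clear hlt hempty
          set W : {x // x ∈ cs.enum} → Set (List ℕ) :=
            fun x => (dp V cost xi x.1.2 (p ++ [x.1.1])).1 with hW
          set σc : {x // x ∈ cs.enum} → ℝ :=
            fun x => (dp V cost xi x.1.2 (p ++ [x.1.1])).2.1 with hσc
          set ξc : {x // x ∈ cs.enum} → ℝ :=
            fun x => (dp V cost xi x.1.2 (p ++ [x.1.1])).2.2 with hξc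
          have hmaps1 : ((γl.map F).map fun r => r.2.2.1) = γl.map σc := by
            rw [List.map_map]
            exact List.map_congr_left (fun x _ => by rw [hF, hσc]; rfl)
          have hmaps2 : ((γl.map F).map fun r => r.2.2.2) = γl.map ξc := by
            rw [List.map_map]
            exact List.map_congr_left (fun x _ => by rw [hF, hξc]; rfl)
          have hlen : (γl.map F).length = γl.length := List.length_map _
          have hUeq : (⋃ r ∈ γl.map F, r.2.1) = ⋃ x ∈ γl, W x := by
            ext q
            simp only [Set.mem_iUnion, List.mem_map]
            constructor
            · rintro ⟨r, ⟨x, hx, rfl⟩, hq⟩; exact ⟨x, hx, hq⟩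
            · rintro ⟨x, hx, hq⟩; exact ⟨F x, ⟨x, hx, rfl⟩, hq⟩
          rw [hUeq, hmaps1, hmaps2, hlen]
          set S := ⋃ x ∈ γl, W x with hS
          have hPb : ∀ x ∈ γl, p ++ [x.1.1] ∈ V := fun x hx => (hIH x hx).1
          have hWsub : ∀ x ∈ γl, W x ⊆ subtreeOf t (p ++ [x.1.1]) :=
            fun x hx q hq => ((hIH x hx).2.2.2.1 hq).2
          have hmemγ : ∀ x : {x // x ∈ cs.enum}, p ++ [x.1.1] ∈ V → x ∈ γl := by
            intro x hxV
            rw [hγl]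
            exact List.mem_filter.mpr ⟨List.mem_attach _ _, by simpa⟩
          have hSint : ∀ x : {x // x ∈ cs.enum},
              S ∩ subtreeOf t (p ++ [x.1.1]) = if p ++ [x.1.1] ∈ V then W x else ∅ := by
            intro x
            by_cases hxV : p ++ [x.1.1] ∈ V
            · rw [if_pos hxV]
              have hxγ : x ∈ γl := hmemγ x hxV
              apply Set.Subset.antisymm
              · rintro q ⟨hqS, hqsub⟩
                rw [hS, Set.mem_iUnion₂] at hqS
                obtain ⟨y, hy, hqW⟩ := hqS
                have hqy : q ∈ subtreeOf t (p ++ [y.1.1]) := hWsub y hy hqW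
                have hyx : y = x := attach_enum_inj y x (index_eq_of_prefix hqy.2 hqsub.2)
                rwa [hyx] at hqW
              · intro q hq
                exact ⟨Set.mem_biUnion hxγ hq, hWsub x hxγ hq⟩
            · rw [if_neg hxV]
              apply Set.eq_empty_iff_forall_notMem.mpr
              rintro q ⟨hqS, hqsub⟩
              rw [hS, Set.mem_iUnion₂] at hqS
              obtain ⟨y, hy, hqW⟩ := hqS
              have hqy := hWsub y hy hqW
              have hyx : y = x := attach_enum_inj y x (index_eq_of_prefix hqy.2 hqsub.2)
              rw [hyx] at hy
              exact hxV (hPb x hy)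
          have hpS : p ∉ S := by
            intro h
            rw [hS, Set.mem_iUnion₂] at h
            obtain ⟨y, hy, hqW⟩ := h
            exact not_mem_subtree_self (hWsub y hy hqW)
          have h1 : S.Nonempty := by
            obtain ⟨x0, hx0⟩ := List.exists_mem_of_ne_nil γl hne
            obtain ⟨q, hq⟩ := (hIH x0 hx0).2.1
            exact ⟨q, Set.mem_biUnion hx0 hq⟩
          have h2 : S.Finite :=
            Set.Finite.biUnion (γl.finite_toSet) (fun x hx => (hIH x hx).2.2.1)
          have h3 : S ⊆ V ∩ subtreeOf t p := by
            rintro q hq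
            rw [hS, Set.mem_iUnion₂] at hq
            obtain ⟨x, hx, hqW⟩ := hq
            have hq2 := (hIH x hx).2.2.2.1 hqW
            exact ⟨hq2.1, subtree_mono hq2.2⟩
          have hfil : ((cs.enum.attach.map fun x =>
              (S ∩ subtreeOf t (p ++ [x.1.1]),
                costOf t cost xi x.1.2 (p ++ [x.1.1]) (S ∩ subtreeOf t (p ++ [x.1.1])))).filter
              fun r => decide r.1.Nonempty)
              = γl.map (fun x =>
              (S ∩ subtreeOf t (p ++ [x.1.1]),
                costOf t cost xi x.1.2 (p ++ [x.1.1]) (S ∩ subtreeOf t (p ++ [x.1.1])))) := by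
            rw [List.filter_map]
            congr 1
            rw [hγl]
            apply List.filter_congr
            intro x _
            simp only [Function.comp_def, hSint x]
            by_cases hxV : p ++ [x.1.1] ∈ V
            · have hxγ : x ∈ γl := hmemγ x hxV
              simp [hxV, hW, (hIH x hxγ).2.1]
            · simp [hxV, Set.not_nonempty_empty]
          have hmid : ((cs.enum.attach.map fun x =>
              (S ∩ subtreeOf t (p ++ [x.1.1]),
                costOf t cost xi x.1.2 (p ++ [x.1.1]) (S ∩ subtreeOf t (p ++ [x.1.1])))).map
              fun r => r.2).sum = (γl.map σc).sum := by
            have e1 : ((cs.enum.attach.map fun x =>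
                (S ∩ subtreeOf t (p ++ [x.1.1]),
                  costOf t cost xi x.1.2 (p ++ [x.1.1]) (S ∩ subtreeOf t (p ++ [x.1.1])))).map
                fun r => r.2) = cs.enum.attach.map (fun x =>
                  costOf t cost xi x.1.2 (p ++ [x.1.1]) (S ∩ subtreeOf t (p ++ [x.1.1]))) := by
              rw [List.map_map]; rfl
            rw [e1]
            have hvan : ∀ x ∈ cs.enum.attach,
                ¬ ((fun x : {x // x ∈ cs.enum} => decide (p ++ [x.1.1] ∈ V)) x) →
                costOf t cost xi x.1.2 (p ++ [x.1.1]) (S ∩ subtreeOf t (p ++ [x.1.1])) = 0 := by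
              intro x _ hPx
              rw [hSint x, if_neg (by simpa using hPx)]
              exact costOf_empty t cost xi _ x.1.2 le_rfl _
            rw [list_sum_filter_eq _ _ _ hvan, ← hγl]
            apply congrArg List.sum
            apply List.map_congr_left
            intro x hx
            rw [hSint x, if_pos (hPb x hx)]
            exact ((hIH x hx).2.2.2.2.1).symm
          have hpen : (((γl.map (fun x : {x // x ∈ cs.enum} =>
              (S ∩ subtreeOf t (p ++ [x.1.1]),
                costOf t cost xi x.1.2 (p ++ [x.1.1]) (S ∩ subtreeOf t (p ++ [x.1.1]))))).map
              (fun r => ∑' d : r.1, xi d.1)).sum : ℝ) = (γl.map ξc).sum := by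
            rw [List.map_map]
            apply congrArg List.sum
            apply List.map_congr_left
            intro x hx
            show (∑' d : (S ∩ subtreeOf t (p ++ [x.1.1]) : Set (List ℕ)), xi d.1) = ξc x
            rw [hSint x, if_pos (hPb x hx)]
            exact ((hIH x hx).2.2.2.2.2).symm
          have h4 : (γl.map σc).sum + (if 1 < γl.length then (γl.map ξc).sum else 0)
              = costOf t cost xi (node cs) p S := by
            rw [costOf_node]
            simp only [if_neg hpS, hfil, List.length_map, hmid, hpen]
            by_cases hc : 1 < γl.length
            · rw [if_pos hc, if_pos (by omega : 2 ≤ γl.length)]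
              ring
            · rw [if_neg hc, if_neg (by omega : ¬ 2 ≤ γl.length)]
              ring
          have h5 : (γl.map ξc).sum = ∑' d : (S : Set (List ℕ)), xi d.1 := by
            have hSL : S = ⋃ A ∈ γl.map W, A := by
              ext q
              simp only [hS, Set.mem_iUnion, List.mem_map]
              constructor
              · rintro ⟨x, hx, h⟩; exact ⟨W x, ⟨x, hx, rfl⟩, h⟩
              · rintro ⟨A, ⟨x, hx, rfl⟩, h⟩; exact ⟨x, hx, h⟩
            have hLfin : ∀ A ∈ γl.map W, A.Finite := by
              intro A hA
              obtain ⟨x, hx, rfl⟩ := List.mem_map.mp hA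
              exact (hIH x hx).2.2.1
            have hLpw : (γl.map W).Pairwise Disjoint := by
              rw [List.pairwise_map]
              have hpwγ : γl.Pairwise (fun x y => x.1.1 ≠ y.1.1) := by
                rw [hγl]; exact (attach_enum_pairwise cs).filter _
              refine hpwγ.imp_of_mem ?_
              intro x y hx hy hne'
              exact Set.disjoint_of_subset (hWsub x hx) (hWsub y hy) (subtree_disjoint hne')
            rw [hSL, tsum_biUnion_list xi _ hLfin hLpw, List.map_map]
            apply congrArg List.sum
            apply List.map_congr_left
            intro x hx
            exact (hIH x hx).2.2.2.2.2
          exact ⟨h1, h2, h3, h4, h5⟩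
open RTree in
/-- For every node `a ∈ V`, the set `Vstar(a)` computed by the recurrences is a
nonempty subset of `V ∩ subtree(a)`, and the DP values are consistent with the
recursively defined objective: `sigma(a) = Cost_a(Vstar(a))` and
`xistar(a) = Σ_{d ∈ Vstar(a)} xi(d)`. -/
theorem streak_dp_consistency
    (t : RTree) (V : Set (List ℕ)) (cost xi : List ℕ → ℝ)
    (hVnodes : ∀ p ∈ V, t.valid p)
    (hanc : ∀ (p : List ℕ) (i : ℕ), p ++ [i] ∈ V → p ∈ V)
    (hcost : ∀ p, 0 ≤ cost p) (hxi : ∀ p, 0 ≤ xi p) :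
    ∀ a : List ℕ, t.valid a → a ∈ V →
      (VstarAt t V cost xi a).Nonempty ∧
      VstarAt t V cost xi a ⊆ V ∩ subtreeOf t a ∧
      sigmaAt t V cost xi a = CostAt t cost xi a (VstarAt t V cost xi a) ∧
      xistarAt t V cost xi a = ∑' d : (VstarAt t V cost xi a : Set (List ℕ)), xi d.1 := by
  intro a hval haV
  obtain ⟨s, hs⟩ := Option.isSome_iff_exists.mp hval
  have hmain := dp_main t V cost xi (sizeOf s) s le_rfl a hs haV
  have e1 : VstarAt t V cost xi a = (dp V cost xi s a).1 := by
    rw [VstarAt, hs]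
  have e2 : sigmaAt t V cost xi a = (dp V cost xi s a).2.1 := by
    rw [sigmaAt, hs]
  have e3 : xistarAt t V cost xi a = (dp V cost xi s a).2.2 := by
    rw [xistarAt, hs]
  have e4 : CostAt t cost xi a (VstarAt t V cost xi a)
      = costOf t cost xi s a (dp V cost xi s a).1 := by
    rw [CostAt, hs, e1]
  rw [e2, e3, e4, e1]
  exact ⟨hmain.1, hmain.2.2.1, hmain.2.2.2⟩
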